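/- The set ℳ₃ of triples (m₁,m₂,m₃) of natural numbers satisfying 2 ≤ m₁ ≤ m₂ ≤ m₃, Θ > 0, m₃ ≤ 4/Θ, β := 4/Θ a positive integer, β even and β²/2 divisible by each mᵢ, consists exactly of the 32 triples: (2,3,7), (2,3,8), (2,4,5), (2,3,9), (2,3,10), (2,3,12), (2,4,6), (3,3,4), (2,3,14), (2,5,5), (2,3,18), (2,4,8), (2,3,30), (2,5,6), (3,3,5), (2,4,12), (2,6,6), (3,3,6), (3,4,4), (2,4,20), (2,5,10), (2,6,9), (3,3,9), (2,8,8), (4,4,4), (2,7,14), (2,12,12), (3,4,12), (3,6,6), (4,4,6), (5,5,5), (4,8,8). -/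

import Mathlib

/-- The orbifold canonical degree `Θ` of a tuple of natural numbers (given as a list). -/
def thetaL (l : List ℕ) : ℚ := -2 + (l.map fun m => 1 - 1 / (m : ℚ)).sum

/-- Membership in `ℳ_r`: the entries are at least `2` and weakly increasing, `Θ > 0`,
every entry (equivalently, the largest entry `m_r`) is at most `β := 4/Θ`, `β` is a
positive integer, `β` is even, and `β²/2` is divisible by each entry. -/
def McondL (l : List ℕ) : Prop :=
  (∀ m ∈ l, 2 ≤ m) ∧ l.Pairwise (· ≤ ·) ∧ 0 < thetaL l ∧
    (∀ m ∈ l, (m : ℚ) ≤ 4 / thetaL l) ∧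
    ∃ n : ℕ, 0 < n ∧ (4 : ℚ) / thetaL l = n ∧ 2 ∣ n ∧ ∀ m ∈ l, m ∣ n ^ 2 / 2

/-- Arithmetic version of `McondL` for triples. -/
def Pnat (a b c : ℕ) : Prop :=
  2 ≤ a ∧ a ≤ b ∧ b ≤ c ∧ b*c + a*c + a*b < a*b*c ∧
  (a*b*c - (b*c + a*c + a*b)) ∣ 4*(a*b*c) ∧
  c ≤ 4*(a*b*c) / (a*b*c - (b*c + a*c + a*b)) ∧
  2 ∣ 4*(a*b*c) / (a*b*c - (b*c + a*c + a*b)) ∧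
  a ∣ (4*(a*b*c) / (a*b*c - (b*c + a*c + a*b)))^2 / 2 ∧
  b ∣ (4*(a*b*c) / (a*b*c - (b*c + a*c + a*b)))^2 / 2 ∧
  c ∣ (4*(a*b*c) / (a*b*c - (b*c + a*c + a*b)))^2 / 2

def Pb (a b c : ℕ) : Bool :=
  decide (2 ≤ a) && decide (a ≤ b) && decide (b ≤ c) &&
  decide (b*c + a*c + a*b < a*b*c) &&
  (4*(a*b*c) % (a*b*c - (b*c + a*c + a*b)) == 0) &&
  decide (c ≤ 4*(a*b*c) / (a*b*c - (b*c + a*c + a*b))) &&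
  (4*(a*b*c) / (a*b*c - (b*c + a*c + a*b)) % 2 == 0) &&
  ((4*(a*b*c) / (a*b*c - (b*c + a*c + a*b)))^2 / 2 % a == 0) &&
  ((4*(a*b*c) / (a*b*c - (b*c + a*c + a*b)))^2 / 2 % b == 0) &&
  ((4*(a*b*c) / (a*b*c - (b*c + a*c + a*b)))^2 / 2 % c == 0)

lemma pb_iff (a b c : ℕ) : Pnat a b c ↔ Pb a b c = true := by
  simp [Pnat, Pb, Nat.dvd_iff_mod_eq_zero, and_assoc]

def L32 : List (ℕ × ℕ × ℕ) := [(2,3,7), (2,3,8), (2,4,5), (2,3,9), (2,3,10), (2,3,12),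
        (2,4,6), (3,3,4), (2,3,14), (2,5,5), (2,3,18), (2,4,8), (2,3,30),
        (2,5,6), (3,3,5), (2,4,12), (2,6,6), (3,3,6), (3,4,4), (2,4,20),
        (2,5,10), (2,6,9), (3,3,9), (2,8,8), (4,4,4), (2,7,14), (2,12,12),
        (3,4,12), (3,6,6), (4,4,6), (5,5,5), (4,8,8)]

def chk : Bool := (List.range 8).all fun a => (List.range 13).all fun b =>
  (List.range 31).all fun c => Pb a b c == L32.contains (a,b,c)

set_option maxHeartbeats 0 in
lemma chk_true : chk = true := by decide

lemma key (a b c : ℕ) (ha : a < 8) (hb : b < 13) (hc : c < 31) :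
    Pnat a b c ↔ (a,b,c) ∈ L32 := by
  have h := chk_true
  unfold chk at h
  rw [List.all_eq_true] at h
  have h1 := h a (List.mem_range.2 ha)
  rw [List.all_eq_true] at h1
  have h2 := h1 b (List.mem_range.2 hb)
  rw [List.all_eq_true] at h2
  have h3 := h2 c (List.mem_range.2 hc)
  rw [beq_iff_eq] at h3
  rw [pb_iff, h3]
  exact ⟨fun h' => List.mem_of_elem_eq_true h', fun h' => List.elem_eq_true_of_mem h'⟩

lemma boundZ (A B C : ℤ) (hA2 : 2 ≤ A) (hAB : A ≤ B) (hBC : B ≤ C)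
    (hLT : B*C + A*C + A*B < A*B*C)
    (hM : C * (A*B*C - (B*C + A*C + A*B)) ≤ 4*(A*B*C)) :
    A ≤ 7 ∧ B ≤ 12 ∧ C ≤ 30 := by
  have hC0 : (0:ℤ) < C := by linarith
  have hB0 : (0:ℤ) < B := by linarith
  have hA0 : (0:ℤ) < A := by linarith
  have hB2 : (2:ℤ) ≤ B := hA2.trans hAB
  have hAB4 : (4:ℤ) ≤ A*B := by
    have := mul_le_mul hA2 hB2 (by norm_num) (by linarith : (0:ℤ) ≤ A)
    linarith
  have hABpos : (0:ℤ) < A*B := by linarith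
  have h1 : 1 ≤ A*B - A - B := by
    by_contra h
    push_neg at h
    have h' : A*B - A - B ≤ 0 := by omega
    have := mul_nonpos_of_nonneg_of_nonpos hC0.le h'
    nlinarith [this, hLT, hAB4]
  have hD4 : A*B*C - (B*C+A*C+A*B) ≤ 4*(A*B) := by
    have h' : (A*B*C - (B*C+A*C+A*B)) * C ≤ (4*(A*B))*C := by linarith [hM]
    exact le_of_mul_le_mul_right h' hC0
  have h2 : C * (A*B - A - B) ≤ 5*(A*B) := by linarith [hD4]
  have hX0 : (0:ℤ) ≤ A*B - A - B := by linarith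
  -- A ≤ 7
  have hAA : A * (A*B - A - B) ≤ 5*(A*B) := by
    have := mul_le_mul_of_nonneg_right (hAB.trans hBC) hX0
    linarith
  have g1 : A*A ≤ A*B := mul_le_mul_of_nonneg_left hAB (by linarith)
  have g2 : A*(A*B) ≤ 7*(A*B) := by nlinarith [hAA, g1]
  have hA7 : A ≤ 7 := by
    have := le_of_mul_le_mul_right
      (by linarith [g2] : A*(A*B) ≤ 7*(A*B)) hABpos
    linarith
  -- B ≤ 12
  have hBB : B * (A*B - A - B) ≤ 5*(A*B) := by
    have := mul_le_mul_of_nonneg_right hBC hX0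
    linarith
  have g3 : ((A-1)*B)*B ≤ (6*A)*B := by nlinarith [hBB]
  have g4 : (A-1)*B ≤ 6*A := le_of_mul_le_mul_right g3 hB0
  have hB12 : B ≤ 12 := by
    have h6 : 6*A ≤ 12*(A-1) := by linarith
    have : B*(A-1) ≤ 12*(A-1) := by linarith [g4]
    have := le_of_mul_le_mul_right this (by linarith : (0:ℤ) < A - 1)
    linarith
  -- C ≤ 30
  have hC30 : C ≤ 30 := by
    by_contra hcon
    push_neg at hcon
    rcases le_or_gt 3 A with h3 | h3
    · have hB3' : (3:ℤ) ≤ B := h3.trans hAB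
      have f1 : 3*B ≤ A*B := mul_le_mul_of_nonneg_right h3 (by linarith)
      have f2 : A*3 ≤ A*B := mul_le_mul_of_nonneg_left hB3' (by linarith)
      have e1 : 0 < (C - 30)*(A*B - A - B) := mul_pos (by linarith) (by linarith)
      nlinarith [e1, f1, f2, h2]
    · have hA2' : A = 2 := by omega
      rw [hA2'] at h2 h1
      have hB3 : 3 ≤ B := by linarith
      have e1 : 0 < (C - 30)*(B - 2) := mul_pos (by linarith) (by linarith)
      nlinarith [e1, h2, hB3]
  exact ⟨hA7, hB12, hC30⟩

lemma theta_eq (a b c : ℕ) (ha : 0 < a) (hb : 0 < b) (hc : 0 < c) :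
    thetaL [a,b,c] = (((a*b*c : ℕ):ℚ) - (((b*c + a*c + a*b : ℕ)):ℚ)) / ((a*b*c : ℕ):ℚ) := by
  have ha' : (a:ℚ) ≠ 0 := Nat.cast_ne_zero.2 ha.ne'
  have hb' : (b:ℚ) ≠ 0 := Nat.cast_ne_zero.2 hb.ne'
  have hc' : (c:ℚ) ≠ 0 := Nat.cast_ne_zero.2 hc.ne'
  simp only [thetaL, List.map_cons, List.map_nil, List.sum_cons, List.sum_nil]
  simp only [bind, pure, List.flatMap_cons, List.flatMap_nil, List.cons_append, List.nil_append, List.map_cons, List.map_nil, List.sum_cons, List.sum_nil]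
  push_cast
  field_simp
  ring


lemma bound (a b c : ℕ) (h : Pnat a b c) : a < 8 ∧ b < 13 ∧ c < 31 := by
  obtain ⟨ha2, hab, hbc, hlt, hdvd, hcle, -⟩ := h
  have hD : 0 < a*b*c - (b*c + a*c + a*b) := Nat.sub_pos_of_lt hlt
  have hmul : c * (a*b*c - (b*c + a*c + a*b)) ≤ 4*(a*b*c) :=
    (Nat.le_div_iff_mul_le hD).1 hcle
  have hA2 : (2:ℤ) ≤ (a:ℤ) := by exact_mod_cast ha2
  have hAB : (a:ℤ) ≤ b := by exact_mod_cast hab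
  have hBC : (b:ℤ) ≤ c := by exact_mod_cast hbc
  have hLT : (b:ℤ)*c + (a:ℤ)*c + (a:ℤ)*b < (a:ℤ)*b*c := by exact_mod_cast hlt
  have hM : (c:ℤ) * ((a:ℤ)*b*c - ((b:ℤ)*c + (a:ℤ)*c + (a:ℤ)*b)) ≤ 4*((a:ℤ)*b*c) := by
    have h2 := hmul
    zify [hlt.le] at h2
    linarith
  obtain ⟨h7, h12, h30⟩ := boundZ (a:ℤ) (b:ℤ) (c:ℤ) hA2 hAB hBC hLT hM
  have ha7 : a ≤ 7 := by exact_mod_cast h7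
  have hb12 : b ≤ 12 := by exact_mod_cast h12
  have hc30 : c ≤ 30 := by exact_mod_cast h30
  omega

lemma mcond_iff (a b c : ℕ) : McondL [a,b,c] ↔ Pnat a b c := by
  constructor
  · rintro ⟨h2, hs, hθ, hle, n, hn0, hβ, h2n, hdvd⟩
    have ha2 : 2 ≤ a := h2 a (by simp)
    have hb2 : 2 ≤ b := h2 b (by simp)
    have hc2 : 2 ≤ c := h2 c (by simp)
    have ha : 0 < a := by omega
    have hb : 0 < b := by omega
    have hc : 0 < c := by omega
    simp only [List.pairwise_cons, List.mem_cons] at hs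
    have hab : a ≤ b := hs.1 b (Or.inl rfl)
    have hbc : b ≤ c := hs.2.1 c (Or.inl rfl)
    have hm : 0 < a*b*c := by positivity
    have hmq : (0:ℚ) < ((a*b*c : ℕ):ℚ) := by exact_mod_cast hm
    rw [theta_eq a b c ha hb hc] at hθ hβ hle
    have hlt : b*c + a*c + a*b < a*b*c := by
      have h1 : (0:ℚ) < ((a*b*c:ℕ):ℚ) - ((b*c+a*c+a*b:ℕ):ℚ) := by
        by_contra hcon
        push_neg at hcon
        have : thetaL [a,b,c] ≤ 0 := by
          rw [theta_eq a b c ha hb hc]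
          exact div_nonpos_of_nonpos_of_nonneg hcon hmq.le
        rw [theta_eq a b c ha hb hc] at this
        linarith
      have := sub_pos.1 h1
      exact_mod_cast this
    have hθq : (0:ℚ) < ((a*b*c:ℕ):ℚ) - ((b*c+a*c+a*b:ℕ):ℚ) := by
      rw [sub_pos]; exact_mod_cast hlt
    have hcn : c ≤ n := by
      have := hle c (by simp)
      rw [hβ] at this
      exact_mod_cast this
    rw [div_div_eq_mul_div, div_eq_iff (ne_of_gt hθq)] at hβ
    have hnat : 4 * (a*b*c) = n * (a*b*c - (b*c+a*c+a*b)) := by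
      have hq : ((4 * (a*b*c) : ℕ) : ℚ) = ((n * (a*b*c - (b*c+a*c+a*b)) : ℕ) : ℚ) := by
        push_cast [Nat.cast_sub hlt.le]
        push_cast at hβ
        linarith
      exact_mod_cast hq
    have hD : 0 < a*b*c - (b*c + a*c + a*b) := Nat.sub_pos_of_lt hlt
    have hndiv : n = 4*(a*b*c) / (a*b*c - (b*c+a*c+a*b)) :=
      (Nat.div_eq_of_eq_mul_left hD hnat).symm
    have hdd : (a*b*c - (b*c + a*c + a*b)) ∣ 4*(a*b*c) := Dvd.intro_left n hnat.symm
    exact ⟨ha2, hab, hbc, hlt, hdd, hndiv ▸ hcn, hndiv ▸ h2n,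
      hndiv ▸ hdvd a (by simp), hndiv ▸ hdvd b (by simp), hndiv ▸ hdvd c (by simp)⟩
  · rintro ⟨ha2, hab, hbc, hlt, hdd, hcn, h2n, hda, hdb, hdc⟩
    have ha : 0 < a := by omega
    have hb : 0 < b := by omega
    have hc : 0 < c := by omega
    have hm : 0 < a*b*c := by positivity
    have hD : 0 < a*b*c - (b*c + a*c + a*b) := Nat.sub_pos_of_lt hlt
    have hnat : 4 * (a*b*c) = (4*(a*b*c) / (a*b*c - (b*c+a*c+a*b))) * (a*b*c - (b*c+a*c+a*b)) :=
      (Nat.div_mul_cancel hdd).symm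
    set n := 4*(a*b*c) / (a*b*c - (b*c+a*c+a*b)) with hn
    have hn0 : 0 < n := by
      rcases Nat.eq_zero_or_pos n with h | h
      · rw [h, zero_mul] at hnat
        exact absurd hnat.symm (by positivity : (0:ℕ) < 4*(a*b*c)).ne
      · exact h
    have hmq : (0:ℚ) < ((a*b*c : ℕ):ℚ) := by exact_mod_cast hm
    have hθq : (0:ℚ) < ((a*b*c:ℕ):ℚ) - ((b*c+a*c+a*b:ℕ):ℚ) := by
      rw [sub_pos]; exact_mod_cast hlt
    have hθpos : 0 < thetaL [a,b,c] := by
      rw [theta_eq a b c ha hb hc]; positivity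
    have hβ : (4:ℚ) / thetaL [a,b,c] = n := by
      rw [theta_eq a b c ha hb hc, div_div_eq_mul_div, div_eq_iff (ne_of_gt hθq)]
      have hq : ((4 * (a*b*c) : ℕ) : ℚ) = ((n * (a*b*c - (b*c+a*c+a*b)) : ℕ) : ℚ) := by
        exact_mod_cast congrArg (Nat.cast (R := ℚ)) hnat
      push_cast [Nat.cast_sub hlt.le] at hq
      push_cast
      linarith
    refine ⟨?_, ?_, hθpos, ?_, n, hn0, hβ, h2n, ?_⟩
    · intro m hm'; simp only [List.mem_cons, List.not_mem_nil, or_false] at hm'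
      rcases hm' with h|h|h <;> omega
    · simp only [List.pairwise_cons, List.mem_cons, List.not_mem_nil, or_false,
        List.Pairwise.nil, and_true]
      constructor
      · rintro x (rfl | rfl) <;> omega
      · constructor
        · rintro x rfl; exact hbc
        · simp
    · intro m hm'
      rw [hβ]
      simp only [List.mem_cons, List.not_mem_nil, or_false] at hm'
      have hcnq : (c:ℚ) ≤ (n:ℚ) := by exact_mod_cast hcn
      have hbcq : (b:ℚ) ≤ (c:ℚ) := by exact_mod_cast hbc
      have habq : (a:ℚ) ≤ (b:ℚ) := by exact_mod_cast hab
      rcases hm' with h|h|h <;> subst h <;> linarith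
    · intro m hm'
      simp only [List.mem_cons, List.not_mem_nil, or_false] at hm'
      rcases hm' with h|h|h <;> subst h
      · exact hda
      · exact hdb
      · exact hdc

theorem stmt_5 (m₁ m₂ m₃ : ℕ) :
    McondL [m₁, m₂, m₃] ↔
      (m₁, m₂, m₃) ∈ ({(2,3,7), (2,3,8), (2,4,5), (2,3,9), (2,3,10), (2,3,12),
        (2,4,6), (3,3,4), (2,3,14), (2,5,5), (2,3,18), (2,4,8), (2,3,30),
        (2,5,6), (3,3,5), (2,4,12), (2,6,6), (3,3,6), (3,4,4), (2,4,20),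
        (2,5,10), (2,6,9), (3,3,9), (2,8,8), (4,4,4), (2,7,14), (2,12,12),
        (3,4,12), (3,6,6), (4,4,6), (5,5,5), (4,8,8)} : Set (ℕ × ℕ × ℕ)) := by
  have hset : (m₁, m₂, m₃) ∈ ({(2,3,7), (2,3,8), (2,4,5), (2,3,9), (2,3,10), (2,3,12),
        (2,4,6), (3,3,4), (2,3,14), (2,5,5), (2,3,18), (2,4,8), (2,3,30),
        (2,5,6), (3,3,5), (2,4,12), (2,6,6), (3,3,6), (3,4,4), (2,4,20),
        (2,5,10), (2,6,9), (3,3,9), (2,8,8), (4,4,4), (2,7,14), (2,12,12),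
        (3,4,12), (3,6,6), (4,4,6), (5,5,5), (4,8,8)} : Set (ℕ × ℕ × ℕ))
      ↔ (m₁, m₂, m₃) ∈ L32 := by
    simp [L32, Set.mem_insert_iff, Set.mem_singleton_iff]
  rw [mcond_iff, hset]
  constructor
  · intro h
    obtain ⟨h1, h2, h3⟩ := bound _ _ _ h
    exact (key _ _ _ h1 h2 h3).1 h
  · intro h
    have hb : m₁ < 8 ∧ m₂ < 13 ∧ m₃ < 31 := by
      have h31 : ∀ x ∈ L32, x.1 < 8 ∧ x.2.1 < 13 ∧ x.2.2 < 31 := by decide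
      exact h31 _ h
    exact (key _ _ _ hb.1 hb.2.1 hb.2.2).2 h
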